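/- Let I = (𝔼, D, c, f) be a CMP instance whose objective f is of type bottleneck, write c* := f(I), and for e ∈ 𝔼 define g(e) := min_{S ∈ D+(e)} max_{a ∈ S ∖ {e}} c(a) if D+(e) ≠ ∅ (with the maximum over the empty set taken as −∞) and g(e) := ∞ if D+(e) = ∅. Then for every e ∈ 𝔼: l'(I,e) = c(e) − c* if g(e) < c*, and l'(I,e) = ∞ otherwise. -/
import Mathlib


open scoped ENNReal BigOperators

/-- Objective type of a combinatorial minimization problem:
sum, product, or bottleneck. -/
inductive ObjType where
  | sum : ObjType
  | prod : ObjType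
  | bottleneck : ObjType
deriving DecidableEq

/-- The cost `f_c(S)` of a feasible solution `S` under cost function `c`:
the sum, the product, or the maximum (for nonempty `S`) of the element costs. -/
noncomputable def objCost {ι : Type*} (t : ObjType) (c : ι → ℝ) (S : Finset ι) : ℝ :=
  match t with
  | ObjType.sum => ∑ e ∈ S, c e
  | ObjType.prod => ∏ e ∈ S, c e
  | ObjType.bottleneck => if h : S.Nonempty then S.sup' h c else 0

/-- The optimal objective value `f(I)` of the instance with feasible set `D`. -/
noncomputable def optVal {ι : Type*} (t : ObjType) (c : ι → ℝ) (D : Finset (Finset ι)) : ℝ :=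
  if h : D.Nonempty then D.inf' h (objCost t c) else 0

/-- `S` is an optimal solution of the instance `(𝔼, D, c, f)`. -/
def isOpt {ι : Type*} (t : ObjType) (c : ι → ℝ) (D : Finset (Finset ι)) (S : Finset ι) : Prop :=
  S ∈ D ∧ objCost t c S = optVal t c D

/-- `0 ≤ a < maxdec(e)`, where `maxdec(e) = ∞` for sum/bottleneck objectives and
`maxdec(e) = c(e)` for the product objective. -/
def decOK {ι : Type*} (t : ObjType) (c : ι → ℝ) (e : ι) (a : ℝ) : Prop :=
  0 ≤ a ∧ (t = ObjType.prod → a < c e)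

/-- Extended single upper tolerance
`u'(I,e) = sup {α ≥ 0 : every optimal solution of I is optimal for I_{α,e}}` valued in `[0,∞]`. -/
noncomputable def uTol {ι : Type*} [DecidableEq ι] (t : ObjType) (c : ι → ℝ)
    (D : Finset (Finset ι)) (e : ι) : ℝ≥0∞ :=
  sSup (ENNReal.ofReal '' {a : ℝ | 0 ≤ a ∧
    ∀ S : Finset ι, isOpt t c D S →
      isOpt t (fun x => if x = e then c x + a else c x) D S})

/-- Extended regular set upper tolerance `u'(I,E)`, valued in `[0,∞]`. -/
noncomputable def uTolSet {ι : Type*} [DecidableEq ι] (t : ObjType) (c : ι → ℝ)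
    (D : Finset (Finset ι)) (E : Finset ι) : ℝ≥0∞ :=
  sSup (ENNReal.ofReal '' {a : ℝ |
    ∀ S : Finset ι, isOpt t c D S →
      ∃ α : ι → ℝ, (∀ x, 0 ≤ α x) ∧ (∀ x ∉ E, α x = 0) ∧
        a = ∑ x ∈ E, α x ∧ isOpt t (fun x => c x + α x) D S})

/-- Extended reverse set upper tolerance `u_b'(I,E)`, valued in `[0,∞]` (`inf ∅ = ∞`). -/
noncomputable def uTolSetRev {ι : Type*} [DecidableEq ι] (t : ObjType) (c : ι → ℝ)
    (D : Finset (Finset ι)) (E : Finset ι) : ℝ≥0∞ :=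
  sInf (ENNReal.ofReal '' {a : ℝ |
    ∃ S : Finset ι, isOpt t c D S ∧
      ∃ α : ι → ℝ, (∀ x, 0 ≤ α x) ∧ (∀ x ∉ E, α x = 0) ∧
        a = ∑ x ∈ E, α x ∧ ¬ isOpt t (fun x => c x + α x) D S})

/-- New single lower tolerance
`l'(I,e) = sup {α : 0 ≤ α < maxdec(e), f(I_{−α,e}) = f(I)}`, valued in `[0,∞]`. -/
noncomputable def lTol {ι : Type*} [DecidableEq ι] (t : ObjType) (c : ι → ℝ)
    (D : Finset (Finset ι)) (e : ι) : ℝ≥0∞ :=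
  sSup (ENNReal.ofReal '' {a : ℝ | decOK t c e a ∧
    optVal t (fun x => if x = e then c x - a else c x) D = optVal t c D})

/-- New regular set lower tolerance `l'(I,E)`, valued in `[0,∞]`. -/
noncomputable def lTolSet {ι : Type*} [DecidableEq ι] (t : ObjType) (c : ι → ℝ)
    (D : Finset (Finset ι)) (E : Finset ι) : ℝ≥0∞ :=
  sSup (ENNReal.ofReal '' {a : ℝ |
    ∃ α : ι → ℝ, (∀ x ∈ E, decOK t c x (α x)) ∧ (∀ x ∉ E, α x = 0) ∧
      a = ∑ x ∈ E, α x ∧ optVal t (fun x => c x - α x) D = optVal t c D})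

/-- New reverse set lower tolerance `l_b'(I,E)`, valued in `[0,∞]` (`inf ∅ = ∞`). -/
noncomputable def lTolSetRev {ι : Type*} [DecidableEq ι] (t : ObjType) (c : ι → ℝ)
    (D : Finset (Finset ι)) (E : Finset ι) : ℝ≥0∞ :=
  sInf (ENNReal.ofReal '' {a : ℝ |
    ∃ α : ι → ℝ, (∀ x ∈ E, decOK t c x (α x)) ∧ (∀ x ∉ E, α x = 0) ∧
      a = ∑ x ∈ E, α x ∧ optVal t (fun x => c x - α x) D < optVal t c D})


/-- `g(e) := min_{S ∈ D⁺(e)} max_{a ∈ S \ {e}} c(a)` (maximum over the empty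
set is `−∞`), and `g(e) := ∞` if `D⁺(e) = ∅`; valued in the extended reals. -/
noncomputable def gBottl {ι : Type*} [DecidableEq ι] (c : ι → ℝ)
    (D : Finset (Finset ι)) (e : ι) : EReal :=
  if h : (D.filter fun S => e ∈ S).Nonempty then
    (D.filter fun S => e ∈ S).inf' h (fun S => (S.erase e).sup (fun a => (c a : EReal)))
  else ⊤

/-- Theorem 5(d): for a bottleneck objective with optimal value `c* = f(I)`,
`l'(I,e) = c(e) − c*` if `g(e) < c*`, and `l'(I,e) = ∞` otherwise. -/
theorem lsi_formula_bottleneck {ι : Type*} [Fintype ι] [DecidableEq ι]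
    (c : ι → ℝ) (D : Finset (Finset ι))
    (hD : D.Nonempty) (hSne : ∀ S ∈ D, S.Nonempty) :
    ∀ e : ι, lTol ObjType.bottleneck c D e =
      if gBottl c D e < ((optVal ObjType.bottleneck c D : ℝ) : EReal) then
        ENNReal.ofReal (c e - optVal ObjType.bottleneck c D)
      else ⊤ := by
  classical
  intro e
  set cs := optVal ObjType.bottleneck c D with hcs
  have hcostS : ∀ (c' : ι → ℝ) (S : Finset ι) (h : S.Nonempty),
      objCost ObjType.bottleneck c' S = S.sup' h c' := by
    intro c' S h
    simp [objCost, h]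
  have hoptD : ∀ c' : ι → ℝ,
      optVal ObjType.bottleneck c' D = D.inf' hD (objCost ObjType.bottleneck c') := by
    intro c'; simp [optVal, hD]
  have hle : ∀ S ∈ D, cs ≤ objCost ObjType.bottleneck c S := by
    intro S hS
    rw [hcs, hoptD]
    exact Finset.inf'_le _ hS
  have hmono : ∀ (c' : ι → ℝ), (∀ x, c' x ≤ c x) →
      optVal ObjType.bottleneck c' D ≤ cs := by
    intro c' h
    rw [hcs, hoptD, hoptD]
    apply Finset.le_inf'
    intro S hS
    refine le_trans (Finset.inf'_le _ hS) ?_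
    rw [hcostS c' S (hSne S hS), hcostS c S (hSne S hS)]
    exact Finset.sup'_mono_fun (fun x _ => h x)
  have hdec : ∀ a : ℝ, decOK ObjType.bottleneck c e a ↔ 0 ≤ a := by
    intro a
    constructor
    · exact fun h => h.1
    · exact fun h => ⟨h, fun hcontr => by simp at hcontr⟩
  -- cost of non-e sets unchanged
  have hsame : ∀ (a : ℝ) (S : Finset ι), S ∈ D → e ∉ S →
      objCost ObjType.bottleneck (fun x => if x = e then c x - a else c x) S
        = objCost ObjType.bottleneck c S := by
    intro a S hS heS
    rw [hcostS _ S (hSne S hS), hcostS c S (hSne S hS)]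
    apply Finset.sup'_congr _ rfl
    intro x hx
    have : x ≠ e := fun h => heS (h ▸ hx)
    simp [this]
  by_cases hg : gBottl c D e < ((cs : ℝ) : EReal)
  · rw [if_pos hg]
    have hfil : (D.filter fun S => e ∈ S).Nonempty := by
      by_contra hfil
      rw [gBottl, dif_neg hfil] at hg
      exact (not_top_lt hg)
    rw [gBottl, dif_pos hfil, Finset.inf'_lt_iff] at hg
    obtain ⟨S₀, hS₀f, hS₀lt⟩ := hg
    have hS₀D : S₀ ∈ D := (Finset.mem_filter.mp hS₀f).1
    have heS₀ : e ∈ S₀ := (Finset.mem_filter.mp hS₀f).2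
    have herase : ∀ x ∈ S₀.erase e, c x < cs := by
      intro x hx
      have h1 : ((c x : ℝ) : EReal) ≤ (S₀.erase e).sup (fun a => (c a : EReal)) :=
        Finset.le_sup (f := fun a => (c a : EReal)) hx
      have := lt_of_le_of_lt h1 hS₀lt
      exact_mod_cast this
    have hce : cs ≤ c e := by
      have h1 := hle S₀ hS₀D
      rw [hcostS c S₀ (hSne S₀ hS₀D)] at h1
      obtain ⟨y, hy, hy2⟩ := Finset.exists_mem_eq_sup' (hSne S₀ hS₀D) c
      rw [hy2] at h1
      rcases eq_or_ne y e with rfl | hne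
      · exact h1
      · exact absurd h1 (not_le.mpr (herase y (Finset.mem_erase.mpr ⟨hne, hy⟩)))
    have hsetEq : {a : ℝ | decOK ObjType.bottleneck c e a ∧
        optVal ObjType.bottleneck (fun x => if x = e then c x - a else c x) D = cs}
        = Set.Icc 0 (c e - cs) := by
      ext a
      simp only [Set.mem_setOf_eq, Set.mem_Icc, hdec]
      constructor
      · rintro ⟨ha0, hopt⟩
        refine ⟨ha0, ?_⟩
        by_contra hgt
        push_neg at hgt
        have hlt : objCost ObjType.bottleneck (fun x => if x = e then c x - a else c x) S₀ < cs := by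
          rw [hcostS _ S₀ (hSne S₀ hS₀D), Finset.sup'_lt_iff]
          intro x hx
          rcases eq_or_ne x e with rfl | hne
          · simp only [if_pos rfl, eq_self_iff_true, if_true]; linarith
          · simp only [if_neg hne]
            exact herase x (Finset.mem_erase.mpr ⟨hne, hx⟩)
        have h2 : optVal ObjType.bottleneck (fun x => if x = e then c x - a else c x) D
            ≤ objCost ObjType.bottleneck (fun x => if x = e then c x - a else c x) S₀ := by
          rw [hoptD]; exact Finset.inf'_le _ hS₀D
        rw [hopt] at h2
        exact absurd (lt_of_le_of_lt h2 hlt) (lt_irrefl cs)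
      · rintro ⟨ha0, hale⟩
        refine ⟨ha0, le_antisymm ?_ ?_⟩
        · apply hmono
          intro x
          rcases eq_or_ne x e with rfl | hne
          · simp only [if_pos rfl, eq_self_iff_true, if_true]; linarith
          · simp [hne]
        · rw [hoptD]
          apply Finset.le_inf'
          intro S hS
          by_cases heS : e ∈ S
          · rw [hcostS _ S (hSne S hS)]
            calc cs ≤ c e - a := by linarith
            _ = (fun x => if x = e then c x - a else c x) e := by simp
            _ ≤ S.sup' (hSne S hS) (fun x => if x = e then c x - a else c x) :=
              Finset.le_sup' (fun x => if x = e then c x - a else c x) heS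
          · rw [hsame a S hS heS]
            exact hle S hS
    rw [lTol, hsetEq]
    have h0 : 0 ≤ c e - cs := by linarith
    apply IsGreatest.csSup_eq
    constructor
    · exact ⟨c e - cs, Set.mem_Icc.mpr ⟨h0, le_refl _⟩, rfl⟩
    · rintro b ⟨x, hx, rfl⟩
      exact ENNReal.ofReal_le_ofReal (Set.mem_Icc.mp hx).2
  · rw [if_neg hg]
    push_neg at hg
    -- every nonnegative a is in the set
    have hmem : ∀ a : ℝ, 0 ≤ a →
        optVal ObjType.bottleneck (fun x => if x = e then c x - a else c x) D = cs := by
      intro a ha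
      refine le_antisymm ?_ ?_
      · apply hmono
        intro x
        rcases eq_or_ne x e with rfl | hne
        · simp only [if_pos rfl, eq_self_iff_true, if_true]; linarith
        · simp [hne]
      · rw [hoptD]
        apply Finset.le_inf'
        intro S hS
        by_cases heS : e ∈ S
        · have hSf : S ∈ D.filter fun S => e ∈ S := Finset.mem_filter.mpr ⟨hS, heS⟩
          have hfil : (D.filter fun S => e ∈ S).Nonempty := ⟨S, hSf⟩
          rw [gBottl, dif_pos hfil] at hg
          have h1 : ((cs : ℝ) : EReal) ≤ (S.erase e).sup (fun a => (c a : EReal)) :=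
            le_trans hg (Finset.inf'_le _ hSf)
          rw [Finset.le_sup_iff (by exact bot_lt_iff_ne_bot.mpr (by simp))] at h1
          obtain ⟨x, hx, hcx⟩ := h1
          have hcx' : cs ≤ c x := by exact_mod_cast hcx
          have hxe : x ≠ e := (Finset.mem_erase.mp hx).1
          rw [hcostS _ S (hSne S hS)]
          calc cs ≤ c x := hcx'
          _ = (fun y => if y = e then c y - a else c y) x := by simp [hxe]
          _ ≤ S.sup' (hSne S hS) (fun y => if y = e then c y - a else c y) :=
            Finset.le_sup' (fun y => if y = e then c y - a else c y) ((Finset.mem_erase.mp hx).2)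
        · rw [hsame a S hS heS]
          exact hle S hS
    rw [lTol, sSup_eq_top]
    intro b hb
    refine ⟨ENNReal.ofReal (b.toReal + 1), ⟨b.toReal + 1, ?_, rfl⟩, ?_⟩
    · have h0 : (0:ℝ) ≤ b.toReal + 1 := by positivity
      exact ⟨(hdec _).mpr h0, hmem _ h0⟩
    · rw [ENNReal.lt_ofReal_iff_toReal_lt hb.ne]
      linarith
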